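/- Every weak P-point ultrafilter U on ω is dynamically discrete: for any action of a countable group G on ω by bijections, the orbit {gU : g ∈ G} of U under the induced action on βω is a discrete subspace of βω. -/

import Mathlib

def IsFreeUF (𝒰 : Ultrafilter ℕ) : Prop := ∀ A : Set ℕ, A.Finite → A ∉ 𝒰

def IsWeakPPoint (𝒰 : Ultrafilter ℕ) : Prop :=
  ∀ 𝒱 : ℕ → Ultrafilter ℕ, (∀ n, IsFreeUF (𝒱 n)) → (∀ n, 𝒱 n ≠ 𝒰) →
    ∃ U ∈ 𝒰, ∀ n, U ∉ 𝒱 n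

/-- The orbit of `𝒰` in `βω` under the action of a group `G ⊆ S_ω`
of permutations of `ω`. -/
def orbitUF (G : Subgroup (Equiv.Perm ℕ)) (𝒰 : Ultrafilter ℕ) :
    Set (Ultrafilter ℕ) :=
  {q | ∃ g ∈ G, q = Ultrafilter.map (⇑g) 𝒰}

/-- `𝒰` is dynamically discrete: for every countable group of permutations
of `ω` the orbit of `𝒰` is a discrete subspace of `βω` (with its Stone
topology, present on `Ultrafilter ℕ` in Mathlib). -/
def IsDynamicallyDiscrete (𝒰 : Ultrafilter ℕ) : Prop :=
  ∀ G : Subgroup (Equiv.Perm ℕ), Countable G →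
    DiscreteTopology (orbitUF G 𝒰)

theorem weakPPoint_isDynamicallyDiscrete (𝒰 : Ultrafilter ℕ)
    (hfree : IsFreeUF 𝒰) (hW : IsWeakPPoint 𝒰) :
    IsDynamicallyDiscrete 𝒰 := by
  intro G hG
  -- Step 1: a set `A ∈ 𝒰` avoiding every orbit point distinct from `𝒰`.
  have key : ∃ A ∈ 𝒰, ∀ g : Equiv.Perm ℕ, g ∈ G →
      Ultrafilter.map (⇑g) 𝒰 ≠ 𝒰 → A ∉ Ultrafilter.map (⇑g) 𝒰 := by
    by_cases hex : ∃ g : G, Ultrafilter.map (⇑(g : Equiv.Perm ℕ)) 𝒰 ≠ 𝒰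
    · haveI : Nonempty {g : G // Ultrafilter.map (⇑(g : Equiv.Perm ℕ)) 𝒰 ≠ 𝒰} :=
        ⟨⟨hex.choose, hex.choose_spec⟩⟩
      obtain ⟨f, hf⟩ :=
        exists_surjective_nat {g : G // Ultrafilter.map (⇑(g : Equiv.Perm ℕ)) 𝒰 ≠ 𝒰}
      set 𝒱 : ℕ → Ultrafilter ℕ :=
        fun n => Ultrafilter.map (⇑((f n : G) : Equiv.Perm ℕ)) 𝒰 with h𝒱
      have hfree' : ∀ n, IsFreeUF (𝒱 n) := by
        intro n A hA hmem
        exact hfree _ (hA.preimage (Equiv.injective _).injOn)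
          (Ultrafilter.mem_map.mp hmem)
      obtain ⟨A, hA𝒰, hA⟩ := hW 𝒱 hfree' (fun n => (f n).2)
      refine ⟨A, hA𝒰, ?_⟩
      intro g hg hne
      obtain ⟨n, hn⟩ := hf ⟨⟨g, hg⟩, hne⟩
      have := hA n
      simpa [h𝒱, hn] using this
    · push_neg at hex
      exact ⟨Set.univ, Filter.univ_mem,
        fun g hg hne => absurd (hex ⟨g, hg⟩) hne⟩
  obtain ⟨A, hA𝒰, hA⟩ := key
  -- Step 2: discreteness.
  rw [discreteTopology_iff_isOpen_singleton]
  rintro ⟨q, g, hg, rfl⟩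
  have hopen : IsOpen (Subtype.val ⁻¹' {V : Ultrafilter ℕ | ⇑g '' A ∈ V} :
      Set (orbitUF G 𝒰)) :=
    (ultrafilter_isOpen_basic _).preimage continuous_subtype_val
  convert hopen using 1
  ext ⟨x, k, hk, rfl⟩
  simp only [Set.mem_singleton_iff, Set.mem_preimage, Set.mem_setOf_eq, Subtype.mk_eq_mk, Subtype.ext_iff]
  constructor
  · rintro h
    rw [h]
    rw [Ultrafilter.mem_map, Equiv.preimage_image]
    exact hA𝒰
  · intro h
    have hmem : A ∈ Ultrafilter.map (⇑(g⁻¹ * k)) 𝒰 := by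
      rw [Ultrafilter.mem_map]
      rw [Ultrafilter.mem_map] at h
      convert h using 1
      ext x
      simp [Equiv.Perm.coe_mul, Set.mem_image_equiv, Equiv.Perm.inv_def]
    have heq : Ultrafilter.map (⇑(g⁻¹ * k)) 𝒰 = 𝒰 := by
      by_contra hne
      exact hA _ (mul_mem (inv_mem hg) hk) hne hmem
    calc Ultrafilter.map (⇑k) 𝒰
        = Ultrafilter.map (⇑g ∘ ⇑(g⁻¹ * k)) 𝒰 := by
          congr 1
          ext x
          simp [Equiv.Perm.coe_mul]
      _ = Ultrafilter.map (⇑g) (Ultrafilter.map (⇑(g⁻¹ * k)) 𝒰) :=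
          (Ultrafilter.map_map _ _ _).symm
      _ = Ultrafilter.map (⇑g) 𝒰 := by rw [heq]
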